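/- For any quiver Q and dimension vectors d, d', the equality hom(d,d') − ext(d,d') = ⟨d,d'⟩ holds, where hom and ext are the generic dimensions of Hom and Ext¹ and ⟨−,−⟩ is the Euler form. -/

import Mathlib

open Module

namespace QT

/-- A (finite) quiver: finite sets of vertices and arrows, with source and target maps. -/
structure Quiv where
  V : Type
  A : Type
  [fv : Fintype V]
  [fa : Fintype A]
  s : A → V
  t : A → V

attribute [instance] Quiv.fv Quiv.fa

/-- The Euler form of a quiver. -/
def eulerForm (Q : Quiv) (d e : Q.V → ℤ) : ℤ :=
  (∑ i, d i * e i) - ∑ a, d (Q.s a) * e (Q.t a)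

/-- The Kac form: symmetrization of the Euler form. -/
def kacForm (Q : Quiv) (d e : Q.V → ℤ) : ℤ :=
  eulerForm Q d e + eulerForm Q e d

/-- Cast a dimension vector to an integral vector. -/
def castN {Q : Quiv} (d : Q.V → ℕ) : Q.V → ℤ := fun i => (d i : ℤ)

/-- A finite-dimensional representation of a quiver over a field `k`. -/
structure Rep (Q : Quiv) (k : Type) [Field k] where
  M : Q.V → Type
  [acg : ∀ i, AddCommGroup (M i)]
  [mod : ∀ i, Module k (M i)]
  [fd : ∀ i, FiniteDimensional k (M i)]
  f : ∀ a, M (Q.s a) →ₗ[k] M (Q.t a)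

attribute [instance] Rep.acg Rep.mod Rep.fd

/-- The dimension vector of a representation. -/
noncomputable def dimVec {Q : Quiv} {k : Type} [Field k] (V : Rep Q k) : Q.V → ℕ :=
  fun i => finrank k (V.M i)

/-- The standard linear map whose kernel is `Hom(V,W)` and whose cokernel is `Ext¹(V,W)`. -/
def Phi {Q : Quiv} {k : Type} [Field k] (V W : Rep Q k) :
    (∀ i, V.M i →ₗ[k] W.M i) →ₗ[k] (∀ a, V.M (Q.s a) →ₗ[k] W.M (Q.t a)) where
  toFun φ := fun a => W.f a ∘ₗ φ (Q.s a) - φ (Q.t a) ∘ₗ V.f a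
  map_add' φ ψ := by
    funext a
    simp only [Pi.add_apply, LinearMap.comp_add, LinearMap.add_comp]
    abel
  map_smul' c φ := by
    funext a
    simp only [Pi.smul_apply, LinearMap.comp_smul, LinearMap.smul_comp, RingHom.id_apply,
      smul_sub]

/-- A subrepresentation, given as a compatible family of submodules. -/
structure Subrep {Q : Quiv} {k : Type} [Field k] (V : Rep Q k) where
  S : ∀ i, Submodule k (V.M i)
  compat : ∀ a, ∀ x ∈ S (Q.s a), V.f a x ∈ S (Q.t a)

/-- Dimension vector of a subrepresentation. -/
noncomputable def Subrep.dim {Q : Quiv} {k : Type} [Field k] {V : Rep Q k} (T : Subrep V) : Q.V → ℕ :=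
  fun i => finrank k (T.S i)

/-- Pointwise containment of subrepresentations. -/
def SubrepLE {Q : Quiv} {k : Type} [Field k] {V : Rep Q k} (T T' : Subrep V) : Prop :=
  ∀ i, T.S i ≤ T'.S i

/-- The zero subrepresentation. -/
def botSub {Q : Quiv} {k : Type} [Field k] (V : Rep Q k) : Subrep V :=
  ⟨fun _ => ⊥, by intro a x hx; simp only [Submodule.mem_bot] at hx ⊢; simp [hx]⟩

/-- The full subrepresentation. -/
def topSub {Q : Quiv} {k : Type} [Field k] (V : Rep Q k) : Subrep V :=
  ⟨fun _ => ⊤, by intro a x _; trivial⟩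

/-- The slope `μ(e) = θ(e)/(a·e)` of an integral vector. -/
def slopeZ {Q : Quiv} (θ : Q.V → ℤ) (a : Q.V → ℕ) (e : Q.V → ℤ) : ℚ :=
  (∑ i, (θ i : ℚ) * (e i : ℚ)) / ∑ i, (a i : ℚ) * (e i : ℚ)

/-- The slope of a dimension vector. -/
def slope {Q : Quiv} (θ : Q.V → ℤ) (a : Q.V → ℕ) (e : Q.V → ℕ) : ℚ :=
  slopeZ θ a (castN e)

/-- Dimension vector of the subquotient `T'/T`. -/
noncomputable def quotDim {Q : Quiv} {k : Type} [Field k] {V : Rep Q k} (T T' : Subrep V) : Q.V → ℤ :=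
  fun i => (T'.dim i : ℤ) - (T.dim i : ℤ)

/-- `μ`-semistability of a representation. -/
def IsSemistable {Q : Quiv} {k : Type} [Field k] (θ : Q.V → ℤ) (a : Q.V → ℕ)
    (V : Rep Q k) : Prop :=
  ∀ T : Subrep V, T.dim ≠ 0 → slope θ a T.dim ≤ slope θ a (dimVec V)

/-- `μ`-semistability of the subquotient `T'/T`, expressed via intermediate
subrepresentations (which correspond to subrepresentations of `T'/T`). -/
def IsSemistableQuot {Q : Quiv} {k : Type} [Field k] {V : Rep Q k} (θ : Q.V → ℤ)
    (a : Q.V → ℕ) (T T' : Subrep V) : Prop :=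
  ∀ U : Subrep V, SubrepLE T U → SubrepLE U T' → U.dim ≠ T.dim →
    slopeZ θ a (quotDim T U) ≤ slopeZ θ a (quotDim T T')

/-- A Harder–Narasimhan filtration of `V` of length `ℓ`. -/
structure IsHNFiltration {Q : Quiv} {k : Type} [Field k] (θ : Q.V → ℤ) (a : Q.V → ℕ)
    (V : Rep Q k) (ℓ : ℕ) (F : Fin (ℓ + 1) → Subrep V) : Prop where
  zero : F 0 = botSub V
  last : F (Fin.last ℓ) = topSub V
  mono : ∀ i : Fin ℓ, SubrepLE (F i.castSucc) (F i.succ)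
  proper : ∀ i : Fin ℓ, (F i.castSucc).dim ≠ (F i.succ).dim
  semistable : ∀ i : Fin ℓ, IsSemistableQuot θ a (F i.castSucc) (F i.succ)
  slopes : ∀ i j : Fin ℓ, i < j →
    slopeZ θ a (quotDim (F j.castSucc) (F j.succ)) <
      slopeZ θ a (quotDim (F i.castSucc) (F i.succ))

/-- `e` is a general subdimension vector of `d`: every representation of dimension
vector `d` (over `ℂ`) admits a subrepresentation of dimension vector `e`. -/
def GeneralSub (Q : Quiv) (e d : Q.V → ℕ) : Prop :=
  e ≤ d ∧ ∀ V : Rep Q ℂ, dimVec V = d → ∃ T : Subrep V, T.dim = e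

/-- `f` is a general quotient dimension vector of `d`: every representation of
dimension vector `d` admits a quotient of dimension vector `f`, equivalently a
subrepresentation of dimension vector `d - f`. -/
def GeneralQuot (Q : Quiv) (d f : Q.V → ℕ) : Prop :=
  f ≤ d ∧ ∀ V : Rep Q ℂ, dimVec V = d → ∃ T : Subrep V, T.dim = fun i => d i - f i

/-- The set of values `dim Ext¹(V,W)` for `V,W` of dimension vectors `d,d'`. -/
def extSet (Q : Quiv) (d d' : Q.V → ℕ) : Set ℕ :=
  {n | ∃ (V : Rep Q ℂ) (W : Rep Q ℂ), dimVec V = d ∧ dimVec W = d' ∧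
    n = finrank ℂ ((∀ a, V.M (Q.s a) →ₗ[ℂ] W.M (Q.t a)) ⧸ LinearMap.range (Phi V W))}

/-- The general (minimal) dimension of `Ext¹` between representations of
dimension vectors `d` and `d'`. -/
noncomputable def extDim (Q : Quiv) (d d' : Q.V → ℕ) : ℕ := sInf (extSet Q d d')

/-- The set of values `dim Hom(V,W)` for `V,W` of dimension vectors `d,d'`. -/
def homSet (Q : Quiv) (d d' : Q.V → ℕ) : Set ℕ :=
  {n | ∃ (V : Rep Q ℂ) (W : Rep Q ℂ), dimVec V = d ∧ dimVec W = d' ∧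
    n = finrank ℂ (LinearMap.ker (Phi V W))}

/-- The general (minimal) dimension of `Hom` between representations of
dimension vectors `d` and `d'`. -/
noncomputable def homDim (Q : Quiv) (d d' : Q.V → ℕ) : ℕ := sInf (homSet Q d d')

/-- Direct sum of a finite family of representations. -/
def dsum {Q : Quiv} {k : Type} [Field k] {n : ℕ} (F : Fin n → Rep Q k) : Rep Q k where
  M i := ∀ j, (F j).M i
  f a := LinearMap.pi fun j => (F j).f a ∘ₗ LinearMap.proj j

/-- Isomorphism of representations. -/
def RepIso {Q : Quiv} {k : Type} [Field k] (V W : Rep Q k) : Prop :=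
  ∃ φ : ∀ i, V.M i ≃ₗ[k] W.M i,
    ∀ a, ∀ x : V.M (Q.s a), φ (Q.t a) (V.f a x) = W.f a (φ (Q.s a) x)

/-- A representation is nonzero if its dimension vector is nonzero. -/
def RepNonzero {Q : Quiv} {k : Type} [Field k] (V : Rep Q k) : Prop :=
  dimVec V ≠ 0

/-- A representation is indecomposable if it is nonzero and not isomorphic to the
direct sum of two nonzero representations. -/
def Indecomposable {Q : Quiv} {k : Type} [Field k] (V : Rep Q k) : Prop :=
  RepNonzero V ∧ ∀ A B : Rep Q k, RepNonzero A → RepNonzero B → ¬ RepIso V (dsum ![A, B])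

/-- The `m`-Kronecker quiver: two vertices and `m` arrows from vertex `0` to vertex `1`. -/
def kronecker (m : ℕ) : Quiv where
  V := Fin 2
  A := Fin m
  s := fun _ => 0
  t := fun _ => 1

/-- A quiver is acyclic if it has no directed cycles. -/
def Acyclic (Q : Quiv) : Prop :=
  ∀ i : Q.V, ¬ Relation.TransGen (fun i j => ∃ a, Q.s a = i ∧ Q.t a = j) i i

/-- A representation of dimension vector `e` which is semistable exists. -/
def HasSemistableRep (Q : Quiv) (θ : Q.V → ℤ) (a : Q.V → ℕ) (e : Q.V → ℕ) : Prop :=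
  ∃ V : Rep Q ℂ, dimVec V = e ∧ IsSemistable θ a V

/-- A Harder–Narasimhan type: a nonempty list of nonzero semistable dimension vectors
summing to `d`, with strictly decreasing slopes. -/
def IsHNType (Q : Quiv) (θ : Q.V → ℤ) (a : Q.V → ℕ) (d : Q.V → ℕ)
    (L : List (Q.V → ℕ)) : Prop :=
  L ≠ [] ∧ (∀ e ∈ L, e ≠ 0 ∧ HasSemistableRep Q θ a e) ∧ L.sum = d ∧
    L.Chain' (fun e e' => slope θ a e' < slope θ a e)


section Aux

/-- A standard representation of a given dimension vector, with zero maps. -/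
noncomputable def repOf (Q : Quiv) (d : Q.V → ℕ) : Rep Q ℂ where
  M i := Fin (d i) → ℂ
  f _ := 0

lemma dimVec_repOf (Q : Quiv) (d : Q.V → ℕ) : dimVec (repOf Q d) = d := by
  funext i
  exact Module.finrank_fin_fun ℂ

lemma key_index (Q : Quiv) (V W : Rep Q ℂ) :
    (finrank ℂ (LinearMap.ker (Phi V W)) : ℤ) -
      (finrank ℂ ((∀ a, V.M (Q.s a) →ₗ[ℂ] W.M (Q.t a)) ⧸ LinearMap.range (Phi V W)) : ℤ) =
      (∑ i, (dimVec V i : ℤ) * (dimVec W i : ℤ)) -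
        ∑ a, (dimVec V (Q.s a) : ℤ) * (dimVec W (Q.t a) : ℤ) := by
  have h1 : finrank ℂ (LinearMap.range (Phi V W)) + finrank ℂ (LinearMap.ker (Phi V W))
      = finrank ℂ (∀ i, V.M i →ₗ[ℂ] W.M i) := LinearMap.finrank_range_add_finrank_ker _
  have h2 : finrank ℂ ((∀ a, V.M (Q.s a) →ₗ[ℂ] W.M (Q.t a)) ⧸ LinearMap.range (Phi V W))
      + finrank ℂ (LinearMap.range (Phi V W))
      = finrank ℂ (∀ a, V.M (Q.s a) →ₗ[ℂ] W.M (Q.t a)) :=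
    Submodule.finrank_quotient_add_finrank _
  have h3 : finrank ℂ (∀ i, V.M i →ₗ[ℂ] W.M i) = ∑ i, dimVec V i * dimVec W i := by
    rw [Module.finrank_pi_fintype ℂ]
    exact Finset.sum_congr rfl fun i _ => Module.finrank_linearMap ℂ ℂ _ _
  have h4 : finrank ℂ (∀ a, V.M (Q.s a) →ₗ[ℂ] W.M (Q.t a))
      = ∑ a, dimVec V (Q.s a) * dimVec W (Q.t a) := by
    rw [Module.finrank_pi_fintype ℂ]
    exact Finset.sum_congr rfl fun a _ => Module.finrank_linearMap ℂ ℂ _ _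
  rw [h3] at h1
  rw [h4] at h2
  have := congrArg (Nat.cast : ℕ → ℤ) h1
  have := congrArg (Nat.cast : ℕ → ℤ) h2
  push_cast at *
  linarith

end Aux

/-- `hom(d,d') - ext(d,d') = ⟨d,d'⟩`. -/
theorem generic_hom_sub_ext (Q : Quiv) (d d' : Q.V → ℕ) :
    (homDim Q d d' : ℤ) - (extDim Q d d' : ℤ) =
      eulerForm Q (castN d) (castN d') := by
  set E := eulerForm Q (castN d) (castN d') with hE
  have hEeq : ∀ (V W : Rep Q ℂ), dimVec V = d → dimVec W = d' →
      (finrank ℂ (LinearMap.ker (Phi V W)) : ℤ) -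
        (finrank ℂ ((∀ a, V.M (Q.s a) →ₗ[ℂ] W.M (Q.t a)) ⧸ LinearMap.range (Phi V W)) : ℤ)
        = E := by
    intro V W hV hW
    rw [key_index Q V W, hV, hW, hE]; simp [eulerForm, castN]
  -- nonemptiness
  have hhne : (homSet Q d d').Nonempty :=
    ⟨_, repOf Q d, repOf Q d', dimVec_repOf Q d, dimVec_repOf Q d', rfl⟩
  have hene : (extSet Q d d').Nonempty :=
    ⟨_, repOf Q d, repOf Q d', dimVec_repOf Q d, dimVec_repOf Q d', rfl⟩
  have hh : homDim Q d d' ∈ homSet Q d d' := Nat.sInf_mem hhne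
  have he : extDim Q d d' ∈ extSet Q d d' := Nat.sInf_mem hene
  obtain ⟨V, W, hV, hW, hval⟩ := hh
  obtain ⟨V', W', hV', hW', hval'⟩ := he
  -- from hom side: homDim = ext(V,W) + E ≥ extDim + E
  have h1 : (homDim Q d d' : ℤ) =
      (finrank ℂ ((∀ a, V.M (Q.s a) →ₗ[ℂ] W.M (Q.t a)) ⧸ LinearMap.range (Phi V W)) : ℤ) + E := by
    have := hEeq V W hV hW
    rw [← hval] at this
    linarith
  have h2 : extDim Q d d' ≤
      finrank ℂ ((∀ a, V.M (Q.s a) →ₗ[ℂ] W.M (Q.t a)) ⧸ LinearMap.range (Phi V W)) :=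
    Nat.sInf_le ⟨V, W, hV, hW, rfl⟩
  -- from ext side: finrank ker (Phi V' W') = extDim + E, and homDim ≤ it
  have h3 : (finrank ℂ (LinearMap.ker (Phi V' W')) : ℤ) = (extDim Q d d' : ℤ) + E := by
    have := hEeq V' W' hV' hW'
    rw [← hval'] at this
    linarith
  have h4 : homDim Q d d' ≤ finrank ℂ (LinearMap.ker (Phi V' W')) :=
    Nat.sInf_le ⟨V', W', hV', hW', rfl⟩
  have h2' : (extDim Q d d' : ℤ) ≤ _ := Int.ofNat_le.mpr h2
  have h4' : (homDim Q d d' : ℤ) ≤ _ := Int.ofNat_le.mpr h4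
  omega


end QT
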